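/- Suppose 0 ≤ B ≤ 2w. Let M⁰ be a w×w left stochastic matrix. Then there exists a left stochastic matrix M with c(M, M⁰) ≤ B and M(1, j) ≥ B/(2w) for every column j ∈ [w]. -/

import Mathlib

open Matrix Finset

noncomputable section

/-- ℓ1 norm of a vector. -/
def l1 {w : ℕ} (x : Fin w → ℝ) : ℝ := ∑ i, |x i|

/-- ℓ∞ norm of a vector. -/
def linf {w : ℕ} (x : Fin w → ℝ) : ℝ := ⨆ i, |x i|

/-- Left (column-)stochastic matrix: nonnegative entries, each column sums to 1. -/
def IsStoch {a b : ℕ} (M : Matrix (Fin a) (Fin b) ℝ) : Prop :=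
  (∀ i j, 0 ≤ M i j) ∧ ∀ j, ∑ i, M i j = 1

/-- Probability vector. -/
def IsProb {w : ℕ} (D : Fin w → ℝ) : Prop := (∀ i, 0 ≤ D i) ∧ ∑ i, D i = 1

/-- Entrywise ℓ1 cost of modifying M0 into M. -/
def cost {a b : ℕ} (M M0 : Matrix (Fin a) (Fin b) ℝ) : ℝ := ∑ i, ∑ j, |M i j - M0 i j|

/-- The product M (n-1) * ⋯ * M 0 (so that `M 0` is applied first to a vector). -/
def chainProd {n w : ℕ} (M : Fin n → Matrix (Fin w) (Fin w) ℝ) : Matrix (Fin w) (Fin w) ℝ :=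
  ((List.ofFn M).reverse).prod
theorem stmt6 {w : ℕ} (hw : 0 < w) (B : ℝ) (hB0 : 0 ≤ B) (hB : B ≤ 2 * w)
    (M0 : Matrix (Fin w) (Fin w) ℝ) (hM0 : IsStoch M0) :
    ∃ M : Matrix (Fin w) (Fin w) ℝ, IsStoch M ∧ cost M M0 ≤ B ∧
      ∀ j, B / (2 * w) ≤ M ⟨0, hw⟩ j := by

  set i0 : Fin w := ⟨0, hw⟩
  have hw' : (0:ℝ) < w := by exact_mod_cast hw
  set lam : ℝ := B / (2 * w) with hlam
  have hlam0 : 0 ≤ lam := div_nonneg hB0 (by positivity)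
  have hlam1 : lam ≤ 1 := by
    rw [hlam, div_le_one (by positivity)]; exact hB
  obtain ⟨hM0pos, hM0sum⟩ := hM0
  have hM0le1 : ∀ i j, M0 i j ≤ 1 := by
    intro i j
    calc M0 i j ≤ ∑ k, M0 k j :=
          Finset.single_le_sum (fun k _ => hM0pos k j) (Finset.mem_univ i)
      _ = 1 := hM0sum j
  refine ⟨fun i j => (1 - lam) * M0 i j + lam * (if i = i0 then 1 else 0), ⟨?_, ?_⟩, ?_, ?_⟩
  · intro i j
    have := hM0pos i j
    dsimp only
    split <;> nlinarith
  · intro j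
    rw [Finset.sum_add_distrib, ← Finset.mul_sum, ← Finset.mul_sum, hM0sum j,
      Finset.sum_ite_eq' Finset.univ i0 (fun _ => (1:ℝ)), if_pos (Finset.mem_univ i0)]
    ring
  · have key : ∀ j : Fin w, ∑ i, |(1 - lam) * M0 i j + lam * (if i = i0 then 1 else 0) - M0 i j|
        = lam * (2 - 2 * M0 i0 j) := by
      intro j
      have : ∀ i : Fin w, |(1 - lam) * M0 i j + lam * (if i = i0 then 1 else 0) - M0 i j|
          = (if i = i0 then lam * (1 - 2 * M0 i j) else 0) + lam * M0 i j := by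
        intro i
        by_cases h : i = i0
        · subst h
          rw [if_pos rfl, if_pos rfl]
          have h1 := hM0le1 i0 j
          rw [show (1 - lam) * M0 i0 j + lam * 1 - M0 i0 j = lam * (1 - M0 i0 j) by ring,
            abs_of_nonneg (by nlinarith)]
          ring
        · simp only [if_neg h]
          rw [show (1 - lam) * M0 i j + lam * 0 - M0 i j = -(lam * M0 i j) by ring,
            abs_neg, abs_of_nonneg (by nlinarith [hM0pos i j])]
          ring
      rw [Finset.sum_congr rfl (fun i _ => this i), Finset.sum_add_distrib,
        Finset.sum_ite_eq' Finset.univ i0, if_pos (Finset.mem_univ i0),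
        ← Finset.mul_sum, hM0sum j]
      ring
    unfold cost
    rw [Finset.sum_comm]
    calc ∑ j, ∑ i, |(1 - lam) * M0 i j + lam * (if i = i0 then 1 else 0) - M0 i j|
        = ∑ j : Fin w, lam * (2 - 2 * M0 i0 j) := by
          exact Finset.sum_congr rfl (fun j _ => key j)
      _ ≤ ∑ j : Fin w, lam * 2 :=
          Finset.sum_le_sum (fun j _ => by nlinarith [hM0pos i0 j])
      _ = w * (lam * 2) := by rw [Finset.sum_const, Finset.card_univ, Fintype.card_fin]; simp
      _ = B := by rw [hlam]; field_simp
  · intro j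
    have := hM0pos i0 j
    dsimp only
    rw [if_pos rfl]
    nlinarith


end
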